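/- In the biased-migration system nᵢ' = (αᵢ − β)·nᵢ + αᵢ·β·(Σⱼnⱼ)/(Σⱼαⱼ) with all αᵢ > 0, β > 0, and all nᵢ(0) > 0: each nᵢ(t) stays strictly positive for all t ≥ 0, and a population i is instantaneously increasing at time t if and only if αᵢ/(Σⱼαⱼ) > (1 − αᵢ/β)·nᵢ(t)/(Σⱼnⱼ(t)); in particular every population with αᵢ ≥ β is strictly increasing at all times (given Σⱼnⱼ > 0). -/

import Mathlib

/-- In the biased-migration system `nᵢ' = (αᵢ−β)nᵢ + αᵢβ N/A`: each population
stays strictly positive; a population is instantaneously increasing iff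
`αᵢ/A > (1 − αᵢ/β) nᵢ/N`; and every population with `αᵢ ≥ β` is strictly
increasing at all times. -/
theorem stmt14 (P : ℕ) (α : Fin P → ℝ) (β : ℝ) (hα : ∀ i, 0 < α i) (hβ : 0 < β)
    (n : Fin P → ℝ → ℝ)
    (hn : ∀ i t, HasDerivAt (n i)
      ((α i - β) * n i t + α i * β * (∑ j, n j t) / (∑ j, α j)) t)
    (hn0 : ∀ i, 0 < n i 0) :
    (∀ i, ∀ t : ℝ, 0 ≤ t → 0 < n i t) ∧
    (∀ i, ∀ t : ℝ, 0 ≤ t →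
      (0 < deriv (n i) t ↔
        α i / (∑ j, α j) > (1 - α i / β) * (n i t / ∑ j, n j t))) ∧
    (∀ i, ∀ t : ℝ, 0 ≤ t → β ≤ α i → 0 < ∑ j, n j t → 0 < deriv (n i) t) := by
  rcases Nat.eq_zero_or_pos P with hP | hP
  · subst hP
    refine ⟨fun i => i.elim0, fun i => i.elim0, fun i => i.elim0⟩
  have : Nonempty (Fin P) := ⟨⟨0, hP⟩⟩
  have hA : 0 < ∑ j, α j := Finset.sum_pos (fun j _ => hα j) Finset.univ_nonempty
  -- continuity
  have hcont : ∀ j, Continuous (n j) := fun j =>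
    continuous_iff_continuousAt.2 fun t => (hn j t).continuousAt
  have hNc : Continuous (fun s => ∑ j, n j s) :=
    continuous_finset_sum _ fun j _ => hcont j
  -- the integrating factor function and its derivative
  have hf : ∀ (i : Fin P) (s : ℝ),
      HasDerivAt (fun u => n i u * Real.exp ((β - α i) * u))
        (α i * β * (∑ j, n j s) / (∑ j, α j) * Real.exp ((β - α i) * s)) s := by
    intro i s
    have he : HasDerivAt (fun u : ℝ => Real.exp ((β - α i) * u))
        (Real.exp ((β - α i) * s) * (β - α i)) s := by
      simpa using (((hasDerivAt_id s).const_mul (β - α i)).exp)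
    have : HasDerivAt (fun u => n i u * Real.exp ((β - α i) * u)) _ s := (hn i s).mul he
    convert this using 1
    field_simp
    ring
  -- key positivity lemma
  have keypos : ∀ (i : Fin P) (t : ℝ), 0 ≤ t →
      (∀ s ∈ Set.Ioo (0:ℝ) t, 0 ≤ ∑ j, n j s) → 0 < n i t := by
    intro i t ht hs
    set f : ℝ → ℝ := fun u => n i u * Real.exp ((β - α i) * u) with hfdef
    have hmono : MonotoneOn f (Set.Icc 0 t) := by
      apply monotoneOn_of_deriv_nonneg (convex_Icc 0 t)
      · exact ((hcont i).mul (by continuity)).continuousOn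
      · intro s _
        exact ((hf i s).differentiableAt).differentiableWithinAt
      · intro s hsmem
        rw [interior_Icc] at hsmem
        rw [(hf i s).deriv]
        have hNs : 0 ≤ ∑ j, n j s := hs s hsmem
        have h1 : 0 ≤ α i * β * (∑ j, n j s) / (∑ j, α j) :=
          div_nonneg (mul_nonneg (mul_nonneg (hα i).le hβ.le) hNs) hA.le
        exact mul_nonneg h1 (Real.exp_pos _).le
    have h0 : (0:ℝ) ∈ Set.Icc (0:ℝ) t := ⟨le_refl 0, ht⟩
    have htm : t ∈ Set.Icc (0:ℝ) t := ⟨ht, le_refl t⟩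
    have hle : f 0 ≤ f t := hmono h0 htm ht
    have hf0 : f 0 = n i 0 := by simp [hfdef]
    have hftpos : 0 < f t := by
      have h1 := hn0 i
      rw [← hf0] at h1
      linarith
    have hftpos' : 0 < n i t * Real.exp ((β - α i) * t) := hftpos
    have hexp := Real.exp_pos ((β - α i) * t)
    nlinarith [hftpos', hexp]
  -- N stays positive
  have hNpos : ∀ t : ℝ, 0 ≤ t → 0 < ∑ j, n j t := by
    by_contra h
    push_neg at h
    obtain ⟨t₀, ht₀, hle⟩ := h
    set S : Set ℝ := {t | 0 ≤ t ∧ (∑ j, n j t) ≤ 0} with hSdef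
    have hne : S.Nonempty := ⟨t₀, ht₀, hle⟩
    have hbdd : BddBelow S := ⟨0, fun x hx => hx.1⟩
    have hSc : IsClosed S := by
      have : S = {t : ℝ | 0 ≤ t} ∩ {t : ℝ | (∑ j, n j t) ≤ 0} := rfl
      rw [this]
      exact (isClosed_le continuous_const continuous_id).inter
        (isClosed_le hNc continuous_const)
    have hTS : sInf S ∈ S := hSc.csInf_mem hne hbdd
    set T := sInf S with hTdef
    have hN0pos : 0 < ∑ j, n j 0 := Finset.sum_pos (fun j _ => hn0 j) Finset.univ_nonempty
    have hT0 : 0 ≤ T := hTS.1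
    have hIoo : ∀ s ∈ Set.Ioo (0:ℝ) T, 0 ≤ ∑ j, n j s := by
      intro s hsmem
      by_contra hc
      push_neg at hc
      have : s ∈ S := ⟨hsmem.1.le, hc.le⟩
      have := csInf_le hbdd this
      exact absurd hsmem.2 (not_lt.2 this)
    have hNT : 0 < ∑ j, n j T :=
      Finset.sum_pos (fun j _ => keypos j T hT0 hIoo) Finset.univ_nonempty
    exact absurd hTS.2 (not_le.2 hNT)
  have hpos : ∀ i, ∀ t : ℝ, 0 ≤ t → 0 < n i t := by
    intro i t ht
    exact keypos i t ht fun s hsmem => (hNpos s hsmem.1.le).le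
  refine ⟨hpos, ?_, ?_⟩
  · intro i t ht
    have hNt := hNpos t ht
    have hd : deriv (n i) t
        = (α i - β) * n i t + α i * β * (∑ j, n j t) / (∑ j, α j) := (hn i t).deriv
    have hkey : α i / (∑ j, α j) - (1 - α i / β) * (n i t / ∑ j, n j t)
        = deriv (n i) t / (β * (∑ j, n j t)) := by
      rw [hd]
      field_simp
      ring
    have hc : 0 < β * (∑ j, n j t) := mul_pos hβ hNt
    constructor
    · intro hD
      rw [gt_iff_lt, ← sub_pos, hkey]
      exact div_pos hD hc
    · intro hG
      rw [gt_iff_lt, ← sub_pos, hkey] at hG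
      have h2 := mul_pos hG hc
      rwa [div_mul_cancel₀ _ hc.ne'] at h2
  · intro i t ht hβα hNt
    have hd : deriv (n i) t
        = (α i - β) * n i t + α i * β * (∑ j, n j t) / (∑ j, α j) := (hn i t).deriv
    rw [hd]
    have h1 : 0 ≤ (α i - β) * n i t :=
      mul_nonneg (sub_nonneg.2 hβα) (hpos i t ht).le
    have h2 : 0 < α i * β * (∑ j, n j t) / (∑ j, α j) :=
      div_pos (mul_pos (mul_pos (hα i) hβ) hNt) hA
    linarith
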